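/- arXiv:1106.5882 — 2 statements merged into one kernel-verified Lean document; each statement's English description precedes it below -/
import Mathlib

section
/- Let K(∂) be an ℓ×ℓ matrix differential operator over a differential field F, and define the F-bilinear pairing ⟨F|G⟩_K = Σ_{i,j} (λ+μ+∂)^{-1}(K_{ij}(μ) − K*_{ji}(λ)) evaluated with λ replaced by ∂ acting on F_i and μ by ∂ acting on G_j. Then for all F, G ∈ F^ℓ, ∂⟨F|G⟩_K = F·K(∂)G − G·K*(∂)F. -/
/-- Application of the matrix differential operator `K(∂) = Σ_{n≤N} K_n ∂^n` to a vector: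
`(K(∂)v)_i = Σ_{j,n} K_{ij;n} ∂^n v_j`. -/
def applyOp {F : Type} [Field F] (d : F → F) {ℓ N : ℕ}
    (K : Fin (N + 1) → Matrix (Fin ℓ) (Fin ℓ) F) (v : Fin ℓ → F) : Fin ℓ → F :=
  fun i => ∑ n : Fin (N + 1), ∑ j, K n i j * d^[(n : ℕ)] (v j)

/-- Application of the adjoint operator `K*(∂)`, `(K*(∂)v)_i = Σ_{j,n} (−∂)^n (K_{ji;n} v_j)`. -/
def applyAdj {F : Type} [Field F] (d : F → F) {ℓ N : ℕ}
    (K : Fin (N + 1) → Matrix (Fin ℓ) (Fin ℓ) F) (v : Fin ℓ → F) : Fin ℓ → F :=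
  fun i => ∑ n : Fin (N + 1), ∑ j, (-1 : F) ^ (n : ℕ) * d^[(n : ℕ)] (K n j i * v j)

/-- The pairing `⟨F|G⟩_K = Σ_{i,j} Σ_{n} Σ_{m<n} binom(n,m)(−∂)^{n−1−m}(F_i K_{ij;n} ∂^m G_j)`. -/
def pairingK {F : Type} [Field F] (d : F → F) {ℓ N : ℕ}
    (K : Fin (N + 1) → Matrix (Fin ℓ) (Fin ℓ) F) (Fv Gv : Fin ℓ → F) : F :=
  ∑ i, ∑ j, ∑ n : Fin (N + 1), ∑ m ∈ Finset.range (n : ℕ),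
    ((n : ℕ).choose m : F) * (-1 : F) ^ ((n : ℕ) - 1 - m) *
      d^[(n : ℕ) - 1 - m] (Fv i * K n i j * d^[m] (Gv j))

section helpers
variable {F : Type} [Field F] {d : F → F}

lemma my_d0 (hd_add : ∀ a b, d (a + b) = d a + d b) : d 0 = 0 := by
  have h := hd_add 0 0
  simp only [add_zero] at h
  exact (right_eq_add.mp h)

lemma my_d_sum (hd_add : ∀ a b, d (a + b) = d a + d b) {ι : Type*} (s : Finset ι) (f : ι → F) :
    d (∑ x ∈ s, f x) = ∑ x ∈ s, d (f x) := by
  induction s using Finset.cons_induction with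
  | empty => simpa using my_d0 hd_add
  | cons a s ha ih => simp [Finset.sum_cons, hd_add, ih]

lemma my_d1 (hd_mul : ∀ a b, d (a * b) = d a * b + a * d b) : d 1 = 0 := by
  have h := hd_mul 1 1
  simp only [mul_one, one_mul] at h
  exact (right_eq_add.mp h)

lemma my_dneg (hd_add : ∀ a b, d (a + b) = d a + d b) (a : F) : d (-a) = -d a := by
  have h := hd_add a (-a)
  simp only [add_neg_cancel, my_d0 hd_add] at h
  exact eq_neg_of_add_eq_zero_right h.symm

lemma my_dnat (hd_add : ∀ a b, d (a + b) = d a + d b)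
    (hd_mul : ∀ a b, d (a * b) = d a * b + a * d b) (n : ℕ) : d (n : F) = 0 := by
  induction n with
  | zero => simpa using my_d0 hd_add
  | succ k ih => push_cast; rw [hd_add, ih, my_d1 hd_mul]; ring

lemma my_dneg1pow (hd_add : ∀ a b, d (a + b) = d a + d b)
    (hd_mul : ∀ a b, d (a * b) = d a * b + a * d b) (k : ℕ) : d ((-1 : F) ^ k) = 0 := by
  induction k with
  | zero => simpa using my_d1 hd_mul
  | succ k ih =>
    rw [pow_succ, hd_mul, ih, my_dneg hd_add, my_d1 hd_mul]; ring

lemma my_dconst (hd_mul : ∀ a b, d (a * b) = d a * b + a * d b)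
    {c : F} (hc : d c = 0) (x : F) : d (c * x) = c * d x := by
  rw [hd_mul, hc]; ring

lemma my_dcoeff (hd_add : ∀ a b, d (a + b) = d a + d b)
    (hd_mul : ∀ a b, d (a * b) = d a * b + a * d b) (C k : ℕ) :
    d ((C : F) * (-1 : F) ^ k) = 0 := by
  rw [hd_mul, my_dnat hd_add hd_mul, my_dneg1pow hd_add hd_mul]; ring

end helpers

section key
variable {F : Type} [Field F] (d : F → F)

/-- Closed form for the pairing kernel. -/
lemma closedForm (hd_add : ∀ a b, d (a + b) = d a + d b)
    (hd_mul : ∀ a b, d (a * b) = d a * b + a * d b) (n : ℕ) (a b : F) :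
    ∑ m ∈ Finset.range n, ((n.choose m : F) * (-1 : F) ^ (n - 1 - m) *
        d^[n - 1 - m] (a * d^[m] b))
    = ∑ k ∈ Finset.range n, (-1 : F) ^ k * d^[k] a * d^[n - 1 - k] b := by
  induction n generalizing b with
  | zero => simp
  | succ n ih =>
    rw [Finset.sum_range_succ']
    have pascal : ∀ m ∈ Finset.range n,
        ((n + 1).choose (m + 1) : F) * (-1 : F) ^ (n + 1 - 1 - (m + 1)) *
            d^[n + 1 - 1 - (m + 1)] (a * d^[m + 1] b)
        = (n.choose m : F) * (-1 : F) ^ (n - 1 - m) * d^[n - 1 - m] (a * d^[m] (d b))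
          + (n.choose (m + 1) : F) * (-1 : F) ^ (n - 1 - m) * d^[n - 1 - m] (a * d^[m + 1] b) := by
      intro m hm
      have h1 : n + 1 - 1 - (m + 1) = n - 1 - m := by omega
      have h2 : d^[m + 1] b = d^[m] (d b) := Function.iterate_succ_apply d m b
      rw [h1, Nat.choose_succ_succ]
      push_cast
      rw [h2]
      ring
    rw [Finset.sum_congr rfl pascal, Finset.sum_add_distrib, ih (d b)]
    have fix1 : ∑ k ∈ Finset.range n, (-1 : F) ^ k * d^[k] a * d^[n - 1 - k] (d b)
        = ∑ k ∈ Finset.range n, (-1 : F) ^ k * d^[k] a * d^[n - k] b := by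
      apply Finset.sum_congr rfl
      intro k hk
      simp only [Finset.mem_range] at hk
      rw [show n - k = (n - 1 - k) + 1 by omega, Function.iterate_succ_apply]
    rw [fix1]
    have regroup :
        (∑ m ∈ Finset.range n, (n.choose (m + 1) : F) * (-1 : F) ^ (n - 1 - m) *
            d^[n - 1 - m] (a * d^[m + 1] b))
          + ((n + 1).choose 0 : F) * (-1 : F) ^ (n + 1 - 1 - 0) * d^[n + 1 - 1 - 0] (a * d^[0] b)
        = ∑ m ∈ Finset.range (n + 1), (n.choose m : F) * (-1 : F) ^ (n - m) *
            d^[n - m] (a * d^[m] b) := by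
      rw [Finset.sum_range_succ']
      congr 1
      · apply Finset.sum_congr rfl
        intro m hm
        rw [show n - (m + 1) = n - 1 - m by omega]
      · simp
    rw [add_assoc, regroup, Finset.sum_range_succ]
    have topterm : (n.choose n : F) * (-1 : F) ^ (n - n) * d^[n - n] (a * d^[n] b)
        = a * d^[n] b := by simp
    rw [topterm]
    have pullout : ∑ m ∈ Finset.range n, (n.choose m : F) * (-1 : F) ^ (n - m) *
          d^[n - m] (a * d^[m] b)
        = - ∑ k ∈ Finset.range n,
            ((-1 : F) ^ k * d^[k + 1] a * d^[n - 1 - k] b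
              + (-1 : F) ^ k * d^[k] a * d^[n - k] b) := by
      have step1 : ∑ m ∈ Finset.range n, (n.choose m : F) * (-1 : F) ^ (n - m) *
            d^[n - m] (a * d^[m] b)
          = - d (∑ m ∈ Finset.range n, (n.choose m : F) * (-1 : F) ^ (n - 1 - m) *
              d^[n - 1 - m] (a * d^[m] b)) := by
        rw [my_d_sum hd_add, ← Finset.sum_neg_distrib]
        apply Finset.sum_congr rfl
        intro m hm
        simp only [Finset.mem_range] at hm
        rw [mul_assoc, mul_assoc, my_dconst hd_mul (my_dnat hd_add hd_mul _),
          my_dconst hd_mul (my_dneg1pow hd_add hd_mul _),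
          ← Function.iterate_succ_apply' d, show (n - 1 - m).succ = n - m by omega,
          show (-1 : F) ^ (n - m) = -(-1 : F) ^ (n - 1 - m) by
            rw [show n - m = (n - 1 - m) + 1 by omega, pow_succ]; ring]
        ring
      rw [step1, ih b, my_d_sum hd_add]
      congr 1
      apply Finset.sum_congr rfl
      intro k hk
      simp only [Finset.mem_range] at hk
      rw [mul_assoc, my_dconst hd_mul (my_dneg1pow hd_add hd_mul k), hd_mul,
        ← Function.iterate_succ_apply' d k a, ← Function.iterate_succ_apply' d (n - 1 - k) b]
      simp only [Nat.succ_eq_add_one, show (n - 1 - k) + 1 = n - k by omega]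
      ring
    rw [pullout, Finset.sum_add_distrib, Finset.sum_range_succ']
    have fix2 : ∑ k ∈ Finset.range n, (-1 : F) ^ (k + 1) * d^[k + 1] a * d^[n + 1 - 1 - (k + 1)] b
        = ∑ k ∈ Finset.range n, -((-1 : F) ^ k * d^[k + 1] a * d^[n - 1 - k] b) := by
      apply Finset.sum_congr rfl
      intro k hk
      rw [show n + 1 - 1 - (k + 1) = n - 1 - k by omega, pow_succ]
      ring
    rw [fix2, Finset.sum_neg_distrib]
    simp only [pow_zero, Function.iterate_zero_apply, one_mul, Nat.sub_zero,
      Nat.add_sub_cancel]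
    abel


/-- Key identity: `d` of the kernel sum telescopes. -/
lemma keyId (hd_add : ∀ a b, d (a + b) = d a + d b)
    (hd_mul : ∀ a b, d (a * b) = d a * b + a * d b) (n : ℕ) (a b : F) :
    d (∑ m ∈ Finset.range n, ((n.choose m : F) * (-1 : F) ^ (n - 1 - m) *
        d^[n - 1 - m] (a * d^[m] b)))
    = a * d^[n] b - (-1 : F) ^ n * d^[n] a * b := by
  rw [closedForm d hd_add hd_mul n a b, my_d_sum hd_add]
  have expand : ∀ k ∈ Finset.range n, d ((-1 : F) ^ k * d^[k] a * d^[n - 1 - k] b)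
      = (fun k => (-1 : F) ^ k * d^[k] a * d^[n - k] b) k
        - (fun k => (-1 : F) ^ k * d^[k] a * d^[n - k] b) (k + 1) := by
    intro k hk
    simp only [Finset.mem_range] at hk
    simp only []
    rw [mul_assoc, my_dconst hd_mul (my_dneg1pow hd_add hd_mul k), hd_mul,
      ← Function.iterate_succ_apply' d k a, ← Function.iterate_succ_apply' d (n - 1 - k) b]
    simp only [Nat.succ_eq_add_one, show (n - 1 - k) + 1 = n - k by omega,
      show n - (k + 1) = n - 1 - k by omega, pow_succ]
    ring
  rw [Finset.sum_congr rfl expand, Finset.sum_range_sub']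
  simp

end key


/-- for every `F, G ∈ F^ℓ`,
`∂⟨F|G⟩_K = F·K(∂)G − G·K*(∂)F`. -/
theorem stmt_6 {F : Type} [Field F] (d : F → F)
    (hd_add : ∀ a b, d (a + b) = d a + d b)
    (hd_mul : ∀ a b, d (a * b) = d a * b + a * d b)
    (ℓ N : ℕ)
    (K : Fin (N + 1) → Matrix (Fin ℓ) (Fin ℓ) F)
    (Fv Gv : Fin ℓ → F) :
    d (pairingK d K Fv Gv) =
      (∑ i, Fv i * applyOp d K Gv i) - (∑ i, Gv i * applyAdj d K Fv i) := by
  unfold pairingK applyOp applyAdj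
  rw [my_d_sum hd_add]
  have h1 : ∀ i ∈ (Finset.univ : Finset (Fin ℓ)),
      d (∑ j, ∑ n : Fin (N + 1), ∑ m ∈ Finset.range (n : ℕ),
          ((n : ℕ).choose m : F) * (-1 : F) ^ ((n : ℕ) - 1 - m) *
            d^[(n : ℕ) - 1 - m] (Fv i * K n i j * d^[m] (Gv j)))
      = ∑ j, ∑ n : Fin (N + 1),
          (Fv i * K n i j * d^[(n : ℕ)] (Gv j)
            - (-1 : F) ^ (n : ℕ) * d^[(n : ℕ)] (Fv i * K n i j) * Gv j) := by
    intro i _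
    rw [my_d_sum hd_add]
    apply Finset.sum_congr rfl
    intro j _
    rw [my_d_sum hd_add]
    apply Finset.sum_congr rfl
    intro n _
    exact keyId d hd_add hd_mul (n : ℕ) (Fv i * K n i j) (Gv j)
  rw [Finset.sum_congr rfl h1]
  simp only [Finset.sum_sub_distrib]
  congr 1
  · apply Finset.sum_congr rfl
    intro i _
    simp only [Finset.mul_sum]
    rw [Finset.sum_comm]
    apply Finset.sum_congr rfl
    intro j _
    apply Finset.sum_congr rfl
    intro n _
    ring
  · rw [Finset.sum_comm]
    apply Finset.sum_congr rfl
    intro p _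
    simp only [Finset.mul_sum]
    rw [Finset.sum_comm]
    apply Finset.sum_congr rfl
    intro n _
    apply Finset.sum_congr rfl
    intro q _
    rw [mul_comm (K n q p) (Fv q)]
    ring
end

section
/- If K(∂) is a skewadjoint ℓ×ℓ matrix differential operator over a differential field F with constants C, then for every F, G ∈ ker(K(∂)) ⊆ F^ℓ, the element ⟨F|G⟩_K lies in C. -/
/-- The coefficients of the adjoint operator `K*`. -/
def adjCoeff {F : Type} [Field F] (d : F → F) {ℓ N : ℕ}
    (K : Fin (N + 1) → Matrix (Fin ℓ) (Fin ℓ) F) :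
    Fin (N + 1) → Matrix (Fin ℓ) (Fin ℓ) F :=
  fun m => Matrix.of fun i j =>
    ∑ n : Fin (N + 1),
      if (m : ℕ) ≤ (n : ℕ) then
        ((n : ℕ).choose (m : ℕ) : F) * (-1 : F) ^ (n : ℕ) * d^[(n : ℕ) - (m : ℕ)] (K n j i)
      else 0

set_option linter.unusedSectionVars false

section aux
variable {F : Type} [Field F] (d : F → F)
  (hd_add : ∀ a b, d (a + b) = d a + d b)
  (hd_mul : ∀ a b, d (a * b) = d a * b + a * d b)

include hd_add hd_mul

lemma d_zero : d 0 = 0 := by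
  have := hd_add 0 0; simp at this; exact this

lemma d_one : d 1 = 0 := by
  have := hd_mul 1 1; simp at this; exact this

lemma d_natCast (n : ℕ) : d (n : F) = 0 := by
  induction n with
  | zero => simpa using d_zero d hd_add hd_mul
  | succ k ih => push_cast; rw [hd_add, ih, d_one d hd_add hd_mul]; ring

lemma d_neg_one : d (-1 : F) = 0 := by
  have h : d (1 + (-1) : F) = d 1 + d (-1) := hd_add 1 (-1)
  simp [d_zero d hd_add hd_mul, d_one d hd_add hd_mul] at h
  exact h.symm

lemma d_neg_one_pow (k : ℕ) : d ((-1 : F) ^ k) = 0 := by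
  induction k with
  | zero => simpa using d_one d hd_add hd_mul
  | succ k ih => rw [pow_succ, hd_mul, ih, d_neg_one d hd_add hd_mul]; ring

lemma d_const_mul (c x : F) (hc : d c = 0) : d (c * x) = c * d x := by
  rw [hd_mul, hc]; ring

lemma d_sum {α : Type*} (s : Finset α) (f : α → F) :
    d (∑ a ∈ s, f a) = ∑ a ∈ s, d (f a) := by
  classical
  induction s using Finset.induction with
  | empty => simpa using d_zero d hd_add hd_mul
  | insert _ _ h ih => rw [Finset.sum_insert h, hd_add, ih, Finset.sum_insert h]

lemma d_leibniz (n : ℕ) (a b : F) :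
    d^[n] (a * b) = ∑ m ∈ Finset.range (n + 1),
      ((n.choose m : F)) * (d^[m] a * d^[n - m] b) := by
  induction n with
  | zero => simp
  | succ n ih =>
    rw [Function.iterate_succ_apply', ih, d_sum d hd_add hd_mul]
    have step : ∀ m ∈ Finset.range (n + 1),
        d ((n.choose m : F) * (d^[m] a * d^[n - m] b))
        = (n.choose m : F) * (d^[m + 1] a * d^[n - m] b)
          + (n.choose m : F) * (d^[m] a * d^[n - m + 1] b) := by
      intro m hm
      rw [d_const_mul d hd_add hd_mul _ _ (d_natCast d hd_add hd_mul _), hd_mul,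
        ← Function.iterate_succ_apply' d, ← Function.iterate_succ_apply' d]
      ring
    rw [Finset.sum_congr rfl step, Finset.sum_add_distrib]
    have e1 : (∑ m ∈ Finset.range (n+1), ((n.choose m : F)) * (d^[m] a * d^[n - m + 1] b))
        = (∑ m ∈ Finset.range (n+1), ((n.choose (m+1) : F)) * (d^[m+1] a * d^[n - m] b))
          + a * d^[n+1] b := by
      rw [Finset.sum_range_succ' (fun m => ((n.choose m : F)) * (d^[m] a * d^[n - m + 1] b)) n,
        Finset.sum_range_succ (fun m => ((n.choose (m+1) : F)) * (d^[m+1] a * d^[n - m] b)) n]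
      simp only [Nat.choose_succ_self, Nat.cast_zero, zero_mul, add_zero, Nat.choose_zero_right,
        Nat.cast_one, one_mul, Function.iterate_zero, id_eq, Nat.sub_zero]
      have : ∀ m ∈ Finset.range n, ((n.choose (m+1) : F)) * (d^[m+1] a * d^[n - (m+1) + 1] b)
          = ((n.choose (m+1) : F)) * (d^[m+1] a * d^[n - m] b) := by
        intro m hm
        simp only [Finset.mem_range] at hm
        congr 3
        omega
      rw [Finset.sum_congr rfl this]
    rw [e1, Finset.sum_range_succ' (fun m => (((n+1).choose m : F)) * (d^[m] a * d^[n + 1 - m] b)) (n+1)]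
    have e2 : ∀ m ∈ Finset.range (n+1),
        (((n+1).choose (m+1) : F)) * (d^[m+1] a * d^[n + 1 - (m+1)] b)
        = ((n.choose m : F)) * (d^[m+1] a * d^[n - m] b)
          + ((n.choose (m+1) : F)) * (d^[m+1] a * d^[n - m] b) := by
      intro m hm
      have h1 : n + 1 - (m+1) = n - m := by omega
      rw [h1, Nat.choose_succ_succ]
      push_cast
      ring
    rw [Finset.sum_congr rfl e2, Finset.sum_add_distrib]
    simp only [Nat.choose_zero_right, Nat.cast_one, one_mul, Function.iterate_zero, id_eq,
      Nat.sub_zero]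
    ring

lemma d_c (a k : ℕ) : d ((a : F) * (-1:F)^k) = 0 := by
  rw [hd_mul, d_natCast d hd_add hd_mul, d_neg_one_pow d hd_add hd_mul]; ring

lemma d_cc (a k : ℕ) (x : F) : d ((a : F) * (-1:F)^k * x) = (a : F) * (-1:F)^k * d x :=
  d_const_mul d hd_add hd_mul _ _ (d_c d hd_add hd_mul a k)

lemma lagrange_L (n : ℕ) (h g : F) :
    ∑ m ∈ Finset.range (n+1), (n.choose m : F) * (-1:F)^(n-m) * d^[n-m] (h * d^[m] g)
    = (-1:F)^n * d^[n] h * g := by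
  induction n generalizing g with
  | zero => simp
  | succ n ih =>
    rw [Finset.sum_range_succ' (fun m => ((n+1).choose m : F) * (-1:F)^(n+1-m)
      * d^[n+1-m] (h * d^[m] g)) (n+1)]
    have e2 : ∀ m ∈ Finset.range (n+1),
        (((n+1).choose (m+1) : F)) * (-1:F)^(n+1-(m+1)) * d^[n+1-(m+1)] (h * d^[m+1] g)
        = (n.choose m : F) * (-1:F)^(n-m) * d^[n-m] (h * d^[m] (d g))
          + (n.choose (m+1) : F) * (-1:F)^(n-m) * d^[n-m] (h * d^[m+1] g) := by
      intro m hm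
      have h1 : n + 1 - (m+1) = n - m := by omega
      rw [h1, Nat.choose_succ_succ, Function.iterate_succ_apply]
      push_cast
      ring
    rw [Finset.sum_congr rfl e2, Finset.sum_add_distrib, ih (d g)]
    have hA : (∑ m ∈ Finset.range (n+1),
          (n.choose m : F) * (-1:F)^(n+1-m) * d^[n+1-m] (h * d^[m] g))
        = (-1:F)^(n+1) * (d^[n+1] h * g + d^[n] h * d g) := by
      have step : ∀ m ∈ Finset.range (n+1),
          (n.choose m : F) * (-1:F)^(n+1-m) * d^[n+1-m] (h * d^[m] g)
          = -d ((n.choose m : F) * (-1:F)^(n-m) * d^[n-m] (h * d^[m] g)) := by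
        intro m hm
        simp only [Finset.mem_range] at hm
        have h1 : n + 1 - m = (n - m) + 1 := by omega
        rw [h1, pow_succ, Function.iterate_succ_apply' d,
          d_cc d hd_add hd_mul]
        ring
      rw [Finset.sum_congr rfl step, Finset.sum_neg_distrib,
        ← d_sum d hd_add hd_mul, ih g, mul_assoc,
        d_const_mul d hd_add hd_mul _ _ (d_neg_one_pow d hd_add hd_mul n), hd_mul,
        ← Function.iterate_succ_apply' d]
      rw [pow_succ]
      ring
    have h4 := Finset.sum_range_succ' (fun m => (n.choose m : F) * (-1:F)^(n+1-m)
      * d^[n+1-m] (h * d^[m] g)) (n+1)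
    have h5 := Finset.sum_range_succ (fun m => (n.choose m : F) * (-1:F)^(n+1-m)
      * d^[n+1-m] (h * d^[m] g)) (n+1)
    simp only [Nat.choose_succ_self, Nat.cast_zero, zero_mul, add_zero,
      Nat.choose_zero_right, Nat.cast_one, one_mul, Nat.sub_zero,
      Function.iterate_zero, id_eq] at h4 h5
    have e3 : ∀ m ∈ Finset.range (n+1),
        (n.choose (m+1) : F) * (-1:F)^(n-m) * d^[n-m] (h * d^[m+1] g)
        = (n.choose (m+1) : F) * (-1:F)^(n+1-(m+1)) * d^[n+1-(m+1)] (h * d^[m+1] g) := by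
      intro m hm
      have h1 : n + 1 - (m+1) = n - m := by omega
      rw [h1]
    rw [Finset.sum_congr rfl e3]
    rw [hA] at h5
    rw [h5] at h4
    -- h4 : (-1)^(n+1) * (...) = (∑ f∘succ) + (-1)^(n+1-0)... cleaned
    simp only [Nat.choose_zero_right, Nat.cast_one, one_mul, Nat.sub_zero,
      Function.iterate_zero, id_eq]
    linear_combination -h4

lemma key (n : ℕ) (h g : F) :
    d (∑ m ∈ Finset.range n, (n.choose m : F) * (-1:F)^(n-1-m) * d^[n-1-m] (h * d^[m] g))
    = h * d^[n] g - (-1:F)^n * d^[n] h * g := by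
  cases n with
  | zero => simp [d_zero d hd_add hd_mul]
  | succ k =>
    rw [d_sum d hd_add hd_mul]
    have step : ∀ m ∈ Finset.range (k+1),
        d (((k+1).choose m : F) * (-1:F)^(k+1-1-m) * d^[k+1-1-m] (h * d^[m] g))
        = -(((k+1).choose m : F) * (-1:F)^(k+1-m) * d^[k+1-m] (h * d^[m] g)) := by
      intro m hm
      simp only [Finset.mem_range] at hm
      have h1 : k+1-1-m = k-m := by omega
      have h2 : k+1-m = (k-m)+1 := by omega
      rw [h1, h2, d_cc d hd_add hd_mul, Function.iterate_succ_apply' d, pow_succ]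
      ring
    rw [Finset.sum_congr rfl step, Finset.sum_neg_distrib]
    have hL := lagrange_L d hd_add hd_mul (k+1) h g
    rw [Finset.sum_range_succ] at hL
    simp only [Nat.choose_self, Nat.cast_one, one_mul, Nat.sub_self, pow_zero,
      Function.iterate_zero, id_eq] at hL
    linear_combination -hL

end aux

/-- if `K(∂)` is skewadjoint, then for every `F, G ∈ ker K(∂) ⊆ F^ℓ`
the element `⟨F|G⟩_K` is a constant, i.e. `d ⟨F|G⟩_K = 0`. -/
theorem stmt_8 {F : Type} [Field F] (d : F → F)
    (hd_add : ∀ a b, d (a + b) = d a + d b)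
    (hd_mul : ∀ a b, d (a * b) = d a * b + a * d b)
    (ℓ N : ℕ)
    (K : Fin (N + 1) → Matrix (Fin ℓ) (Fin ℓ) F)
    (hskew : ∀ n, adjCoeff d K n = -(K n))
    (Fv Gv : Fin ℓ → F)
    (hF : applyOp d K Fv = 0) (hG : applyOp d K Gv = 0) :
    d (pairingK d K Fv Gv) = 0 := by
  classical
  have hG' : ∀ i, ∑ n : Fin (N+1), ∑ j, K n i j * d^[(n:ℕ)] (Gv j) = 0 := by
    intro i; simpa [applyOp] using congrFun hG i
  have hF' : ∀ j, ∑ m : Fin (N+1), ∑ i, K m j i * d^[(m:ℕ)] (Fv i) = 0 := by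
    intro j; simpa [applyOp] using congrFun hF j
  have h1 : d (pairingK d K Fv Gv)
      = ∑ i, ∑ j, ∑ n : Fin (N+1),
          (Fv i * K n i j * d^[(n:ℕ)] (Gv j)
            - (-1:F)^(n:ℕ) * d^[(n:ℕ)] (Fv i * K n i j) * Gv j) := by
    simp only [pairingK]
    rw [d_sum d hd_add hd_mul]
    refine Finset.sum_congr rfl fun i _ => ?_
    rw [d_sum d hd_add hd_mul]
    refine Finset.sum_congr rfl fun j _ => ?_
    rw [d_sum d hd_add hd_mul]
    exact Finset.sum_congr rfl fun n _ =>
      key d hd_add hd_mul (n:ℕ) (Fv i * K n i j) (Gv j)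
  rw [h1]
  simp only [Finset.sum_sub_distrib]
  have hpart1 : (∑ i, ∑ j, ∑ n : Fin (N+1), Fv i * K n i j * d^[(n:ℕ)] (Gv j)) = 0 := by
    refine Finset.sum_eq_zero fun i _ => ?_
    have e : (∑ j, ∑ n : Fin (N+1), Fv i * K n i j * d^[(n:ℕ)] (Gv j))
        = Fv i * ∑ n : Fin (N+1), ∑ j, K n i j * d^[(n:ℕ)] (Gv j) := by
      rw [Finset.mul_sum, Finset.sum_comm]
      refine Finset.sum_congr rfl fun j _ => ?_
      rw [Finset.mul_sum]
      exact Finset.sum_congr rfl fun n _ => by ring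
    rw [e, hG' i, mul_zero]
  have hpart2 : ∀ j, (∑ i, ∑ n : Fin (N+1), (-1:F)^(n:ℕ) * d^[(n:ℕ)] (Fv i * K n i j)) = 0 := by
    intro j
    have lstep : ∀ (i : Fin ℓ) (n : Fin (N+1)),
        (-1:F)^(n:ℕ) * d^[(n:ℕ)] (Fv i * K n i j)
        = ∑ m : Fin (N+1), (if (m:ℕ) ≤ (n:ℕ) then
            d^[(m:ℕ)] (Fv i) * ((((n:ℕ).choose (m:ℕ)) : F) * (-1:F)^(n:ℕ)
              * d^[(n:ℕ)-(m:ℕ)] (K n i j)) else 0) := by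
      intro i n
      rw [d_leibniz d hd_add hd_mul, Finset.mul_sum]
      have efin : (∑ m : Fin (N+1), (if (m:ℕ) ≤ (n:ℕ) then
            d^[(m:ℕ)] (Fv i) * ((((n:ℕ).choose (m:ℕ)) : F) * (-1:F)^(n:ℕ)
              * d^[(n:ℕ)-(m:ℕ)] (K n i j)) else 0))
          = ∑ m ∈ Finset.range (N+1), (if m ≤ (n:ℕ) then
            d^[m] (Fv i) * ((((n:ℕ).choose m) : F) * (-1:F)^(n:ℕ)
              * d^[(n:ℕ)-m] (K n i j)) else 0) :=
        Fin.sum_univ_eq_sum_range (fun m => if m ≤ (n:ℕ) then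
            d^[m] (Fv i) * ((((n:ℕ).choose m) : F) * (-1:F)^(n:ℕ)
              * d^[(n:ℕ)-m] (K n i j)) else 0) (N+1)
      rw [efin]
      have hsub : Finset.range ((n:ℕ)+1) ⊆ Finset.range (N+1) := by
        intro x hx
        simp only [Finset.mem_range] at hx ⊢
        have := n.isLt
        omega
      rw [← Finset.sum_subset hsub (fun x _ hx2 => by
        simp only [Finset.mem_range] at hx2
        rw [if_neg (by omega)])]
      refine Finset.sum_congr rfl fun m hm => ?_
      simp only [Finset.mem_range] at hm
      rw [if_pos (by omega)]
      ring
    calc (∑ i, ∑ n : Fin (N+1), (-1:F)^(n:ℕ) * d^[(n:ℕ)] (Fv i * K n i j))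
        = ∑ i, ∑ m : Fin (N+1), d^[(m:ℕ)] (Fv i) * ((adjCoeff d K m) j i) := by
          refine Finset.sum_congr rfl fun i _ => ?_
          rw [Finset.sum_congr rfl fun n _ => lstep i n, Finset.sum_comm]
          refine Finset.sum_congr rfl fun m _ => ?_
          simp only [adjCoeff, Matrix.of_apply]
          rw [Finset.mul_sum]
          refine Finset.sum_congr rfl fun n _ => ?_
          rw [mul_ite, mul_zero]
      _ = ∑ i, ∑ m : Fin (N+1), -(K m j i * d^[(m:ℕ)] (Fv i)) := by
          refine Finset.sum_congr rfl fun i _ => Finset.sum_congr rfl fun m _ => ?_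
          rw [hskew m]
          simp only [Matrix.neg_apply]
          ring
      _ = 0 := by
          simp only [Finset.sum_neg_distrib]
          rw [Finset.sum_comm, hF' j, neg_zero]
  have hB : (∑ i, ∑ j, ∑ n : Fin (N+1), (-1:F)^(n:ℕ) * d^[(n:ℕ)] (Fv i * K n i j) * Gv j) = 0 := by
    rw [Finset.sum_comm]
    refine Finset.sum_eq_zero fun j _ => ?_
    have e : (∑ i, ∑ n : Fin (N+1), (-1:F)^(n:ℕ) * d^[(n:ℕ)] (Fv i * K n i j) * Gv j)
        = (∑ i, ∑ n : Fin (N+1), (-1:F)^(n:ℕ) * d^[(n:ℕ)] (Fv i * K n i j)) * Gv j := by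
      rw [Finset.sum_mul]
      refine Finset.sum_congr rfl fun i _ => ?_
      rw [Finset.sum_mul]
    rw [e, hpart2 j, zero_mul]
  rw [hpart1, hB, sub_zero]
end
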